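/- Let U be a finite set and let U₁, …, Uₙ be subsets of U. Let A₁, …, Aₙ be real matrices indexed by U × U such that for each i, the support of Aᵢ is contained in Uᵢ × Uᵢ (i.e., Aᵢ(u,v) = 0 unless both u ∈ Uᵢ and v ∈ Uᵢ), and set A = A₁ + ⋯ + Aₙ. For every v ∈ U let T(v) = { i ∈ [n] : v ∈ Uᵢ }, and for every i ∈ [n] let mᵢ = max_{v ∈ Uᵢ} |T(v)|. Then A·Aᵀ ⪯ Σ_{i=1}^{n} mᵢ · Aᵢ·Aᵢᵀ in the Loewner order. -/

import Mathlib

open Matrix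

theorem stmt_3 (U : Type*) [Fintype U] [DecidableEq U] (n : ℕ)
    (Us : Fin n → Finset U) (A : Fin n → Matrix U U ℝ)
    (hsupp : ∀ i u v, A i u v ≠ 0 → u ∈ Us i ∧ v ∈ Us i)
    (m : Fin n → ℕ)
    (hm : ∀ i, m i = (Us i).sup fun v =>
      (Finset.univ.filter fun j : Fin n => v ∈ Us j).card) :
    ((∑ i, (m i : ℝ) • (A i * (A i)ᵀ)) - (∑ i, A i) * (∑ i, A i)ᵀ).PosSemidef := by
  have herm : ∀ B : Matrix U U ℝ, (B * Bᵀ).IsHermitian := fun B => by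
    simpa using isHermitian_mul_conjTranspose_self B
  rw [posSemidef_iff_dotProduct_mulVec]
  constructor
  · show _ᴴ = _
    rw [conjTranspose_eq_transpose_of_trivial]
    simp [transpose_sub, transpose_sum, transpose_smul, transpose_mul, transpose_transpose]
  · intro x
    have hquad : ∀ B : Matrix U U ℝ, x ⬝ᵥ ((B * Bᵀ) *ᵥ x) = ∑ u, (Bᵀ *ᵥ x) u ^ 2 := by
      intro B
      rw [← mulVec_mulVec, dotProduct_mulVec, ← mulVec_transpose]
      simp [dotProduct, sq]
    set y : Fin n → U → ℝ := fun i u => ((A i)ᵀ *ᵥ x) u with hy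
    have hy0 : ∀ i u, u ∉ Us i → y i u = 0 := by
      intro i u hu
      simp only [hy, mulVec, dotProduct, transpose_apply]
      refine Finset.sum_eq_zero fun v _ => ?_
      rcases eq_or_ne (A i v u) 0 with h | h
      · simp [h]
      · exact absurd (hsupp i v u h).2 hu
    have pointwise : ∀ u, (∑ i, y i u) ^ 2 ≤ ∑ i, (m i : ℝ) * y i u ^ 2 := by
      intro u
      set F := Finset.univ.filter fun j : Fin n => u ∈ Us j with hF
      have h1 : ∑ i, y i u = ∑ i ∈ F, y i u := by
        rw [hF, Finset.sum_filter_of_ne]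
        intro i _ hne
        by_contra hu
        exact hne (hy0 i u hu)
      have h2 : (∑ i ∈ F, y i u) ^ 2 ≤ (F.card : ℝ) * ∑ i ∈ F, y i u ^ 2 := by
        exact_mod_cast sq_sum_le_card_mul_sum_sq (s := F) (f := fun i => y i u)
      have h3 : (F.card : ℝ) * ∑ i ∈ F, y i u ^ 2 ≤ ∑ i ∈ F, (m i : ℝ) * y i u ^ 2 := by
        rw [Finset.mul_sum]
        refine Finset.sum_le_sum fun i hi => ?_
        have hui : u ∈ Us i := (Finset.mem_filter.mp hi).2
        have : F.card ≤ m i := by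
          rw [hm i]
          exact Finset.le_sup (f := fun v => (Finset.univ.filter fun j : Fin n => v ∈ Us j).card) hui
        exact mul_le_mul_of_nonneg_right (by exact_mod_cast this) (sq_nonneg _)
      have h4 : ∑ i ∈ F, (m i : ℝ) * y i u ^ 2 ≤ ∑ i, (m i : ℝ) * y i u ^ 2 := by
        refine Finset.sum_le_sum_of_subset_of_nonneg (Finset.filter_subset _ _) ?_
        intro i _ _
        positivity
      calc (∑ i, y i u) ^ 2 = (∑ i ∈ F, y i u) ^ 2 := by rw [h1]
        _ ≤ _ := h2.trans (h3.trans h4)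
    have hsv : ∀ (B : Fin n → Matrix U U ℝ) (z : U → ℝ), (∑ i, B i) *ᵥ z = ∑ i, B i *ᵥ z := by
      intro B z
      ext u
      simp only [mulVec, dotProduct, Finset.sum_apply, Matrix.sum_apply, Finset.sum_mul]
      rw [Finset.sum_comm]
    have lhs : x ⬝ᵥ (((∑ i, A i) * (∑ i, A i)ᵀ) *ᵥ x) = ∑ u, (∑ i, y i u) ^ 2 := by
      rw [hquad]
      refine Finset.sum_congr rfl fun u _ => ?_
      congr 1
      rw [transpose_sum, hsv]
      simp [hy, Finset.sum_apply]
    have rhs : x ⬝ᵥ ((∑ i, (m i : ℝ) • (A i * (A i)ᵀ)) *ᵥ x) =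
        ∑ u, ∑ i, (m i : ℝ) * y i u ^ 2 := by
      rw [hsv]
      have h5 : ∀ i, x ⬝ᵥ (((m i : ℝ) • (A i * (A i)ᵀ)) *ᵥ x) = (m i : ℝ) * ∑ u, y i u ^ 2 := by
        intro i
        rw [smul_mulVec, dotProduct_smul, smul_eq_mul, hquad]
      have hdv : x ⬝ᵥ (∑ i, ((m i : ℝ) • (A i * (A i)ᵀ)) *ᵥ x)
          = ∑ i, x ⬝ᵥ (((m i : ℝ) • (A i * (A i)ᵀ)) *ᵥ x) := by
        simp only [dotProduct, Finset.sum_apply, Finset.mul_sum]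
        rw [Finset.sum_comm]
      rw [hdv]
      simp only [h5, Finset.mul_sum]
      rw [Finset.sum_comm]
    simp only [star_trivial, sub_mulVec, dotProduct_sub, sub_nonneg, lhs, rhs]
    exact Finset.sum_le_sum fun u _ => pointwise u
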